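/- Let X have a Gamma(α, 1) distribution with integer shape α ≥ 1 and let s ≥ 1 be an integer. Then the (s-1)-th order stop-loss transform satisfies E[(X−x)_+^s] = e^{−x} (s+α−1)!/(α−1)! + e^{−x} ∑_{k=1}^{α−1} ((s+α−1−k)!/(α−1−k)!) x^k/k! for all x ≥ 0. -/

import Mathlib

open MeasureTheory Set Real

lemma integrable_pow_exp (n : ℕ) :
    IntegrableOn (fun t : ℝ => t ^ n * Real.exp (-t)) (Ioi 0) := by
  have h := Real.GammaIntegral_convergent (s := (n : ℝ) + 1) (by positivity)
  refine h.congr_fun (fun t ht => ?_) measurableSet_Ioi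
  rw [add_sub_cancel_right]
  beta_reduce
  rw [Real.rpow_natCast, mul_comm]

lemma integral_pow_exp (n : ℕ) :
    ∫ t in Ioi (0 : ℝ), t ^ n * Real.exp (-t) = (n.factorial : ℝ) := by
  rw [← Real.Gamma_nat_eq_factorial, Real.Gamma_eq_integral (by positivity)]
  refine setIntegral_congr_fun measurableSet_Ioi fun t ht => ?_
  rw [add_sub_cancel_right, Real.rpow_natCast, mul_comm]

/-- Stop-loss transform of a `Gamma(α, 1)` variable with integer shape `α ≥ 1`:
`E[(X-x)_+^s] = e^{-x}(s+α-1)!/(α-1)! + e^{-x} ∑_{k=1}^{α-1} ((s+α-1-k)!/(α-1-k)!) x^k/k!`. -/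
theorem gamma_stop_loss (a s : ℕ) (ha : 1 ≤ a) (hs : 1 ≤ s) (x : ℝ) (hx : 0 ≤ x) :
    ∫ t in Ioi (0 : ℝ), max 0 (t - x) ^ s * (t ^ (a - 1) * Real.exp (-t) / ((a - 1).factorial : ℝ))
      = Real.exp (-x) * (((s + a - 1).factorial : ℝ) / ((a - 1).factorial : ℝ))
        + Real.exp (-x) *
            ∑ k ∈ Finset.Icc 1 (a - 1),
              (((s + a - 1 - k).factorial : ℝ) / ((a - 1 - k).factorial : ℝ)) * x ^ k /
                (k.factorial : ℝ) := by
  obtain ⟨m, rfl⟩ : ∃ m, a = m + 1 := ⟨a - 1, by omega⟩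
  simp only [Nat.add_sub_cancel, show s + (m + 1) - 1 = s + m by omega,
    show ∀ k, s + (m + 1) - 1 - k = s + m - k by omega,
    show ∀ k, m + 1 - 1 - k = m - k by omega]
  set g : ℝ → ℝ := fun t => (t - x) ^ s * (t ^ m * Real.exp (-t)) with hg
  have key : ∫ t in Ioi (0 : ℝ), max 0 (t - x) ^ s * (t ^ m * Real.exp (-t))
      = ∑ k ∈ Finset.range (m + 1),
          Real.exp (-x) * x ^ (m - k) * (m.choose k : ℝ) * ((s + k).factorial : ℝ) := by
    calc ∫ t in Ioi (0 : ℝ), max 0 (t - x) ^ s * (t ^ m * Real.exp (-t))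
        = ∫ t in Ioi (0 : ℝ), (Ioi x).indicator g t := by
          refine setIntegral_congr_fun measurableSet_Ioi fun t ht => ?_
          by_cases h : x < t
          · rw [Set.indicator_of_mem (mem_Ioi.mpr h) g, hg]
            rw [max_eq_right (by linarith)]
          · rw [Set.indicator_of_notMem (by simpa using h) g,
              max_eq_left (by simp at h; linarith), zero_pow (by omega), zero_mul]
      _ = ∫ t in Ioi x, g t := by
          rw [setIntegral_indicator measurableSet_Ioi, Ioi_inter_Ioi, max_eq_right hx]
      _ = ∫ u in Ioi (0 : ℝ), g (u + x) := by
          rw [← integral_indicator measurableSet_Ioi, ← integral_indicator measurableSet_Ioi,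
            ← integral_add_right_eq_self (fun t => (Ioi x).indicator g t) x]
          congr 1
          funext u
          by_cases h : 0 < u
          · rw [Set.indicator_of_mem (show u + x ∈ Ioi x by simp [h]) g,
              Set.indicator_of_mem (mem_Ioi.mpr h)]
          · rw [Set.indicator_of_notMem (show u + x ∉ Ioi x by simp; linarith) g,
              Set.indicator_of_notMem (by simpa using h)]
      _ = ∫ u in Ioi (0 : ℝ), ∑ k ∈ Finset.range (m + 1),
            (Real.exp (-x) * x ^ (m - k) * (m.choose k : ℝ)) *
              (u ^ (s + k) * Real.exp (-u)) := by
          refine setIntegral_congr_fun measurableSet_Ioi fun u hu => ?_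
          rw [hg]
          simp only [add_sub_cancel_right]
          rw [add_pow, show -(u + x) = -u + -x by ring, Real.exp_add,
            Finset.sum_mul, Finset.mul_sum]
          refine Finset.sum_congr rfl fun k hk => ?_
          rw [pow_add]
          ring
      _ = ∑ k ∈ Finset.range (m + 1),
            Real.exp (-x) * x ^ (m - k) * (m.choose k : ℝ) * ((s + k).factorial : ℝ) := by
          rw [integral_finset_sum]
          · refine Finset.sum_congr rfl fun k hk => ?_
            rw [integral_const_mul, integral_pow_exp]
          · intro k hk
            exact (integrable_pow_exp (s + k)).const_mul _
  have hL : ∫ t in Ioi (0 : ℝ),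
      max 0 (t - x) ^ s * (t ^ m * Real.exp (-t) / (m.factorial : ℝ))
      = (∫ t in Ioi (0 : ℝ), max 0 (t - x) ^ s * (t ^ m * Real.exp (-t)))
          * ((m.factorial : ℝ))⁻¹ := by
    rw [← integral_mul_const]
    refine setIntegral_congr_fun measurableSet_Ioi fun t ht => ?_
    ring
  rw [hL, key, Finset.sum_mul, ← Finset.sum_range_reflect]
  have hRHS : Real.exp (-x) * (((s + m).factorial : ℝ) / (m.factorial : ℝ))
        + Real.exp (-x) *
            ∑ k ∈ Finset.Icc 1 m,
              (((s + m - k).factorial : ℝ) / ((m - k).factorial : ℝ)) * x ^ k /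
                (k.factorial : ℝ)
      = ∑ j ∈ Finset.range (m + 1),
          Real.exp (-x) * (((s + m - j).factorial : ℝ) / ((m - j).factorial : ℝ)) * x ^ j /
            (j.factorial : ℝ) := by
    rw [Finset.sum_range_succ', Finset.mul_sum]
    have h0 : Real.exp (-x) * (((s + m - 0).factorial : ℝ) / ((m - 0).factorial : ℝ)) * x ^ 0 /
        ((0).factorial : ℝ) = Real.exp (-x) * (((s + m).factorial : ℝ) / (m.factorial : ℝ)) := by
      simp
    rw [h0, show Finset.Icc 1 m = Finset.Ico 1 (m + 1) by rw [Finset.Ico_add_one_right_eq_Icc],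
      Finset.sum_Ico_eq_sum_range]
    simp only [show m + 1 - 1 = m from rfl]
    rw [add_comm]
    congr 1
    refine Finset.sum_congr rfl fun i hi => ?_
    rw [add_comm 1 i]
    ring
  rw [hRHS]
  refine Finset.sum_congr rfl fun j hj => ?_
  have hjm : j ≤ m := by simpa [Nat.lt_succ_iff] using hj
  rw [show m + 1 - 1 - j = m - j from rfl, Nat.sub_sub_self hjm, Nat.choose_symm hjm,
    show s + (m - j) = s + m - j by omega]
  have hfac := Nat.choose_mul_factorial_mul_factorial hjm
  have hfacR : (m.choose j : ℝ) * (j.factorial : ℝ) * ((m - j).factorial : ℝ)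
      = (m.factorial : ℝ) := by exact_mod_cast hfac
  have h1 : (j.factorial : ℝ) ≠ 0 := by positivity
  have h2 : ((m - j).factorial : ℝ) ≠ 0 := by positivity
  have h3 : (m.factorial : ℝ) ≠ 0 := by positivity
  field_simp
  linear_combination x ^ j * hfacR
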